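/- The function φ₉(p,q) = (p² − 1)/(1 + p²)²·q³ − 3q/(1 + p²) satisfies the equation (1 + p²)φ_pp + 2pq·φ_pq + (1 + q²)φ_qq = 0 for all real p, q. -/

import Mathlib

noncomputable def pd₁ (f : ℝ → ℝ → ℝ) : ℝ → ℝ → ℝ := fun p q => deriv (fun x => f x q) p
noncomputable def pd₂ (f : ℝ → ℝ → ℝ) : ℝ → ℝ → ℝ := fun p q => deriv (fun y => f p y) q

private lemma hne (p : ℝ) : (1:ℝ) + p ^ 2 ≠ 0 := by positivity

private lemma d_base (p : ℝ) : HasDerivAt (fun a : ℝ => 1 + a ^ 2) (2 * p) p := by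
  simpa using (hasDerivAt_pow 2 p).const_add 1

/-- derivative in `a` of `(a²-1)/(1+a²)² * c - d/(1+a²)` -/
private lemma d_gen (c d p : ℝ) :
    HasDerivAt (fun a : ℝ => (a ^ 2 - 1) / (1 + a ^ 2) ^ 2 * c - d / (1 + a ^ 2))
      ((6 * p - 2 * p ^ 3) / (1 + p ^ 2) ^ 3 * c + 2 * p * d / (1 + p ^ 2) ^ 2) p := by
  have h := hne p
  have h2 : ((1:ℝ) + p ^ 2) ^ 2 ≠ 0 := pow_ne_zero _ h
  have A : HasDerivAt (fun a : ℝ => a ^ 2 - 1) (2 * p) p := by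
    simpa using (hasDerivAt_pow 2 p).sub_const 1
  have B : HasDerivAt (fun a : ℝ => (1 + a ^ 2) ^ 2) ((2 : ℕ) * (1 + p ^ 2) ^ 1 * (2 * p)) p :=
    (d_base p).pow 2
  have C := ((A.div B h2).mul_const c).sub ((hasDerivAt_const p d).div (d_base p) h)
  refine C.congr_deriv ?_
  field_simp
  ring

/-- derivative in `a` of the first p-derivative -/
private lemma d11 (q p : ℝ) :
    HasDerivAt (fun a : ℝ => (6 * a - 2 * a ^ 3) / (1 + a ^ 2) ^ 3 * q ^ 3 + 2 * a * (3 * q) / (1 + a ^ 2) ^ 2)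
      ((6 - 36 * p ^ 2 + 6 * p ^ 4) / (1 + p ^ 2) ^ 4 * q ^ 3 + (6 - 18 * p ^ 2) / (1 + p ^ 2) ^ 3 * q) p := by
  have h := hne p
  have h2 : ((1:ℝ) + p ^ 2) ^ 2 ≠ 0 := pow_ne_zero _ h
  have h3 : ((1:ℝ) + p ^ 2) ^ 3 ≠ 0 := pow_ne_zero _ h
  have A : HasDerivAt (fun a : ℝ => 6 * a - 2 * a ^ 3) (6 - 2 * (3 * p ^ 2)) p := by
    have h1 : HasDerivAt (fun a : ℝ => 6 * a) 6 p := by simpa using (hasDerivAt_id p).const_mul 6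
    have h2' : HasDerivAt (fun a : ℝ => 2 * a ^ 3) (2 * (3 * p ^ 2)) p := by
      simpa using (hasDerivAt_pow 3 p).const_mul 2
    exact h1.sub h2'
  have B : HasDerivAt (fun a : ℝ => (1 + a ^ 2) ^ 3) ((3 : ℕ) * (1 + p ^ 2) ^ 2 * (2 * p)) p :=
    (d_base p).pow 3
  have B2 : HasDerivAt (fun a : ℝ => (1 + a ^ 2) ^ 2) ((2 : ℕ) * (1 + p ^ 2) ^ 1 * (2 * p)) p :=
    (d_base p).pow 2
  have N : HasDerivAt (fun a : ℝ => 2 * a * (3 * q)) (2 * (3 * q)) p := by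
    have : HasDerivAt (fun a : ℝ => 2 * a) 2 p := by simpa using (hasDerivAt_id p).const_mul 2
    simpa using this.mul_const (3 * q)
  have C := ((A.div B h3).mul_const (q ^ 3)).add (N.div B2 h2)
  refine C.congr_deriv ?_
  field_simp
  ring

private lemma pd1_eq (p q : ℝ) :
    pd₁ (fun a b => (a ^ 2 - 1) / (1 + a ^ 2) ^ 2 * b ^ 3 - 3 * b / (1 + a ^ 2)) p q
      = (6 * p - 2 * p ^ 3) / (1 + p ^ 2) ^ 3 * q ^ 3 + 2 * p * (3 * q) / (1 + p ^ 2) ^ 2 := by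
  exact (d_gen (q ^ 3) (3 * q) p).deriv

private lemma pd2_eq (p q : ℝ) :
    pd₂ (fun a b => (a ^ 2 - 1) / (1 + a ^ 2) ^ 2 * b ^ 3 - 3 * b / (1 + a ^ 2)) p q
      = (p ^ 2 - 1) / (1 + p ^ 2) ^ 2 * (3 * q ^ 2) - 3 / (1 + p ^ 2) := by
  have A : HasDerivAt (fun b : ℝ => (p ^ 2 - 1) / (1 + p ^ 2) ^ 2 * b ^ 3 - 3 * b / (1 + p ^ 2))
      ((p ^ 2 - 1) / (1 + p ^ 2) ^ 2 * (3 * q ^ 2) - 3 / (1 + p ^ 2)) q := by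
    have h1 : HasDerivAt (fun b : ℝ => (p ^ 2 - 1) / (1 + p ^ 2) ^ 2 * b ^ 3)
        ((p ^ 2 - 1) / (1 + p ^ 2) ^ 2 * (3 * q ^ 2)) q := by
      simpa [mul_assoc, mul_comm, mul_left_comm] using
        (hasDerivAt_pow 3 q).const_mul ((p ^ 2 - 1) / (1 + p ^ 2) ^ 2)
    have h2 : HasDerivAt (fun b : ℝ => 3 * b / (1 + p ^ 2)) (3 / (1 + p ^ 2)) q := by
      have : HasDerivAt (fun b : ℝ => 3 * b) 3 q := by simpa using (hasDerivAt_id q).const_mul 3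
      simpa using this.div_const (1 + p ^ 2)
    exact h1.sub h2
  exact A.deriv

theorem phi_solves_legendre_eq :
    ∀ p q : ℝ,
      (1 + p ^ 2) * pd₁ (pd₁ (fun a b => (a ^ 2 - 1) / (1 + a ^ 2) ^ 2 * b ^ 3 - 3 * b / (1 + a ^ 2))) p q
        + 2 * p * q * pd₁ (pd₂ (fun a b => (a ^ 2 - 1) / (1 + a ^ 2) ^ 2 * b ^ 3 - 3 * b / (1 + a ^ 2))) p q
        + (1 + q ^ 2) * pd₂ (pd₂ (fun a b => (a ^ 2 - 1) / (1 + a ^ 2) ^ 2 * b ^ 3 - 3 * b / (1 + a ^ 2))) p q = 0 := by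
  intro p q
  have h := hne p
  -- second p-derivative
  have e11 : pd₁ (pd₁ (fun a b => (a ^ 2 - 1) / (1 + a ^ 2) ^ 2 * b ^ 3 - 3 * b / (1 + a ^ 2))) p q
      = (6 - 36 * p ^ 2 + 6 * p ^ 4) / (1 + p ^ 2) ^ 4 * q ^ 3 + (6 - 18 * p ^ 2) / (1 + p ^ 2) ^ 3 * q := by
    have hfe : (fun x => pd₁ (fun a b => (a ^ 2 - 1) / (1 + a ^ 2) ^ 2 * b ^ 3 - 3 * b / (1 + a ^ 2)) x q)
        = fun x => (6 * x - 2 * x ^ 3) / (1 + x ^ 2) ^ 3 * q ^ 3 + 2 * x * (3 * q) / (1 + x ^ 2) ^ 2 := by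
      funext x; exact pd1_eq x q
    show deriv _ p = _
    rw [hfe]
    exact (d11 q p).deriv
  -- mixed derivative
  have e12 : pd₁ (pd₂ (fun a b => (a ^ 2 - 1) / (1 + a ^ 2) ^ 2 * b ^ 3 - 3 * b / (1 + a ^ 2))) p q
      = (6 * p - 2 * p ^ 3) / (1 + p ^ 2) ^ 3 * (3 * q ^ 2) + 2 * p * 3 / (1 + p ^ 2) ^ 2 := by
    have hfe : (fun x => pd₂ (fun a b => (a ^ 2 - 1) / (1 + a ^ 2) ^ 2 * b ^ 3 - 3 * b / (1 + a ^ 2)) x q)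
        = fun x => (x ^ 2 - 1) / (1 + x ^ 2) ^ 2 * (3 * q ^ 2) - 3 / (1 + x ^ 2) := by
      funext x; exact pd2_eq x q
    show deriv _ p = _
    rw [hfe]
    exact (d_gen (3 * q ^ 2) 3 p).deriv
  -- second q-derivative
  have e22 : pd₂ (pd₂ (fun a b => (a ^ 2 - 1) / (1 + a ^ 2) ^ 2 * b ^ 3 - 3 * b / (1 + a ^ 2))) p q
      = (p ^ 2 - 1) / (1 + p ^ 2) ^ 2 * (6 * q) := by
    have hfe : (fun y => pd₂ (fun a b => (a ^ 2 - 1) / (1 + a ^ 2) ^ 2 * b ^ 3 - 3 * b / (1 + a ^ 2)) p y)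
        = fun y => (p ^ 2 - 1) / (1 + p ^ 2) ^ 2 * (3 * y ^ 2) - 3 / (1 + p ^ 2) := by
      funext y; exact pd2_eq p y
    show deriv _ q = _
    rw [hfe]
    have h1 : HasDerivAt (fun y : ℝ => (p ^ 2 - 1) / (1 + p ^ 2) ^ 2 * (3 * y ^ 2) - 3 / (1 + p ^ 2))
        ((p ^ 2 - 1) / (1 + p ^ 2) ^ 2 * (6 * q)) q := by
      have h2 : HasDerivAt (fun y : ℝ => (p ^ 2 - 1) / (1 + p ^ 2) ^ 2 * (3 * y ^ 2))
          ((p ^ 2 - 1) / (1 + p ^ 2) ^ 2 * (6 * q)) q := by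
        have := (hasDerivAt_pow 2 q).const_mul ((p ^ 2 - 1) / (1 + p ^ 2) ^ 2 * 3)
        refine (this.congr_deriv ?_).congr_of_eventuallyEq (Filter.Eventually.of_forall fun y => ?_)
        · simp; ring
        · simp only; ring
      simpa using h2.sub_const (3 / (1 + p ^ 2))
    exact h1.deriv
  rw [e11, e12, e22]
  field_simp
  ring
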